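/- arXiv:2005.06038 — 2 statements merged into one kernel-verified Lean document; each statement's English description precedes it below -/
import Mathlib

section
/- Let M ≥ 2 and let X_1, …, X_M ∈ ℝ^{d×N} be view data matrices. For every matrix W ∈ ℝ^{d×k} with Tr(W^T R_w W) > 0, the multi-view correlation objective is bounded above by one: (1/(M−1)) · Tr(W^T R_b W) / Tr(W^T R_w W) ≤ 1; equivalently, Tr(W^T R_b W) ≤ (M−1) · Tr(W^T R_w W). -/
open Matrix BigOperators Finset

lemma scalar_key (M : ℕ) (f : Fin M → ℝ) :
    ∑ p, ∑ l ∈ Finset.univ \ {p}, f l * f p ≤ ((M : ℝ) - 1) * ∑ l, f l ^ 2 := by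
  have h1 : ∀ p : Fin M, ∑ l ∈ Finset.univ \ {p}, f l * f p
      = (∑ l, f l) * f p - f p * f p := by
    intro p
    rw [Finset.sum_sdiff_eq_sub (Finset.subset_univ _), Finset.sum_singleton,
      Finset.sum_mul]
  have h2 : ∑ p, ∑ l ∈ Finset.univ \ {p}, f l * f p
      = (∑ l, f l) * (∑ l, f l) - ∑ p, f p * f p := by
    simp_rw [h1, Finset.sum_sub_distrib, ← Finset.mul_sum]
  have h3 : (∑ l, f l) ^ 2 ≤ ((Finset.univ : Finset (Fin M)).card : ℝ) * ∑ l, f l ^ 2 :=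
    sq_sum_le_card_mul_sum_sq
  have hcard : ((Finset.univ : Finset (Fin M)).card : ℝ) = (M : ℝ) := by simp
  have h4 : ∑ p : Fin M, f p * f p = ∑ p, f p ^ 2 := by simp [sq]
  rw [h2, h4, ← sq]
  rw [hcard] at h3
  linarith [h3]

/-- the multi-view correlation objective is bounded above by one. -/
theorem mvcorr_le_one (M d N k : ℕ) (hM : 2 ≤ M)
    (X : Fin M → Matrix (Fin d) (Fin N) ℝ)
    (W : Matrix (Fin d) (Fin k) ℝ)
    (Rw Rb : Matrix (Fin d) (Fin d) ℝ)
    (hRw : Rw = (1 / (M : ℝ)) • ∑ l, X l * (X l)ᵀ)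
    (hRb : Rb = (1 / (M : ℝ)) • ∑ p, ∑ l ∈ Finset.univ \ {p}, X l * (X p)ᵀ)
    (hpos : 0 < (Wᵀ * Rw * W).trace) :
    (1 / ((M : ℝ) - 1)) * (Wᵀ * Rb * W).trace / (Wᵀ * Rw * W).trace ≤ 1 ∧
      (Wᵀ * Rb * W).trace ≤ ((M : ℝ) - 1) * (Wᵀ * Rw * W).trace := by
  have hM1 : (1 : ℝ) ≤ (M : ℝ) - 1 := by
    have : (2 : ℝ) ≤ (M : ℝ) := by exact_mod_cast hM
    linarith
  have hMpos : (0 : ℝ) < (M : ℝ) := by positivity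
  -- trace formulas
  have htr : ∀ l p : Fin M, (Wᵀ * (X l * (X p)ᵀ) * W).trace
      = ∑ q : Fin N × Fin k, ((X l)ᵀ * W) q.1 q.2 * ((X p)ᵀ * W) q.1 q.2 := by
    intro l p
    have e1 : Wᵀ * (X l * (X p)ᵀ) * W = (Wᵀ * X l) * ((X p)ᵀ * W) := by
      rw [Matrix.mul_assoc, Matrix.mul_assoc, ← Matrix.mul_assoc]
    have e2 : Wᵀ * X l = ((X l)ᵀ * W)ᵀ := by
      rw [Matrix.transpose_mul, Matrix.transpose_transpose]
    rw [e1, e2, Fintype.sum_prod_type]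
    set A := (X l)ᵀ * W
    set B := (X p)ᵀ * W
    simp only [Matrix.trace, Matrix.diag, Matrix.mul_apply, Matrix.transpose_apply]
    rw [Finset.sum_comm]
  have hRwtr : (Wᵀ * Rw * W).trace
      = (1 / (M : ℝ)) * ∑ l, (Wᵀ * (X l * (X l)ᵀ) * W).trace := by
    rw [hRw]
    rw [Matrix.mul_smul, Matrix.smul_mul, Matrix.trace_smul, Matrix.mul_sum,
      Matrix.sum_mul, Matrix.trace_sum]
    simp [Finset.mul_sum, Matrix.mul_assoc]
  have hRbtr : (Wᵀ * Rb * W).trace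
      = (1 / (M : ℝ)) * ∑ p, ∑ l ∈ Finset.univ \ {p}, (Wᵀ * (X l * (X p)ᵀ) * W).trace := by
    rw [hRb]
    rw [Matrix.mul_smul, Matrix.smul_mul, Matrix.trace_smul]
    congr 1
    rw [Matrix.mul_sum, Matrix.sum_mul, Matrix.trace_sum]
    apply Finset.sum_congr rfl; intro p _
    rw [Matrix.mul_sum, Matrix.sum_mul, Matrix.trace_sum]
  -- key inequality
  have key : ∑ p, ∑ l ∈ Finset.univ \ {p}, (Wᵀ * (X l * (X p)ᵀ) * W).trace
      ≤ ((M : ℝ) - 1) * ∑ l, (Wᵀ * (X l * (X l)ᵀ) * W).trace := by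
    simp_rw [htr]
    have swap1 : ∑ p, ∑ l ∈ Finset.univ \ {p},
        ∑ q : Fin N × Fin k, ((X l)ᵀ * W) q.1 q.2 * ((X p)ᵀ * W) q.1 q.2
        = ∑ q : Fin N × Fin k, ∑ p, ∑ l ∈ Finset.univ \ {p},
            ((X l)ᵀ * W) q.1 q.2 * ((X p)ᵀ * W) q.1 q.2 := by
      rw [Finset.sum_comm]
      apply Finset.sum_congr rfl; intro p _
      rw [Finset.sum_comm]
    have swap2 : ((M : ℝ) - 1) * ∑ l, ∑ q : Fin N × Fin k,
        ((X l)ᵀ * W) q.1 q.2 * ((X l)ᵀ * W) q.1 q.2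
        = ∑ q : Fin N × Fin k, ((M : ℝ) - 1) * ∑ l,
            ((X l)ᵀ * W) q.1 q.2 * ((X l)ᵀ * W) q.1 q.2 := by
      rw [← Finset.mul_sum, Finset.sum_comm]
    rw [swap1, swap2]
    apply Finset.sum_le_sum
    intro q _
    have := scalar_key M (fun l => ((X l)ᵀ * W) q.1 q.2)
    simpa [sq] using this
  have ineq : (Wᵀ * Rb * W).trace ≤ ((M : ℝ) - 1) * (Wᵀ * Rw * W).trace := by
    rw [hRwtr, hRbtr, mul_left_comm]
    exact mul_le_mul_of_nonneg_left key (by positivity)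
  refine ⟨?_, ineq⟩
  rw [div_le_one hpos, one_div, inv_mul_eq_div, div_le_iff₀ (by linarith)]
  rw [mul_comm] at ineq
  exact ineq
end

section
/- Let R_b, R_w, Σ_b, Σ_w be symmetric real d×d matrices, and set R_t = R_b + R_w and Σ_t = Σ_b + Σ_w. Let W ∈ ℝ^{d×d} satisfy Tr(W^T R_b W) ≥ 0, Tr(W^T R_w W) > 0, and Tr(W^T Σ_w W) − ‖R_w − Σ_w‖ · Tr(W W^T) > 0. Then Tr(W^T R_b W)/Tr(W^T R_w W) ≤ (Tr(W^T Σ_b W) + (‖R_t − Σ_t‖ + ‖R_w − Σ_w‖) · Tr(W W^T)) / (Tr(W^T Σ_w W) − ‖R_w − Σ_w‖ · Tr(W W^T)). -/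
open Matrix
open scoped RealInnerProductSpace

/-- The spectral (operator) norm of a real matrix. -/
noncomputable def specNorm {m n : ℕ} (A : Matrix (Fin m) (Fin n) ℝ) : ℝ :=
  ‖LinearMap.toContinuousLinearMap (Matrix.toEuclideanLin A)‖

lemma trace_quad_abs_le {d : ℕ} (A W : Matrix (Fin d) (Fin d) ℝ) :
    |(Wᵀ * A * W).trace| ≤ specNorm A * (W * Wᵀ).trace := by
  set T := LinearMap.toContinuousLinearMap (Matrix.toEuclideanLin A) with hT
  have key : ∀ j, |(Wᵀ * A * W) j j| ≤ specNorm A * ∑ i, W i j ^ 2 := by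
    intro j
    set x : EuclideanSpace ℝ (Fin d) := (WithLp.equiv 2 _).symm (fun i => W i j) with hx
    have h1 : (Wᵀ * A * W) j j = ⟪x, T x⟫ := by
      simp only [Matrix.mul_apply, Matrix.transpose_apply, hT, hx,
        LinearMap.coe_toContinuousLinearMap', WithLp.equiv_symm_apply, Matrix.toEuclideanLin_apply_piLp_toLp,
        PiLp.inner_apply, RCLike.inner_apply, conj_trivial, PiLp.toLp_apply,
        Matrix.mulVec, dotProduct]
      simp_rw [Finset.sum_mul]
      rw [Finset.sum_comm]
      exact Finset.sum_congr rfl fun k _ => Finset.sum_congr rfl fun i _ => by ring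
    have h2 : ⟪x, x⟫ = ∑ i, W i j ^ 2 := by
      rw [hx, PiLp.inner_apply]; simp [sq]
    have h3 : |⟪x, T x⟫| ≤ ‖T‖ * ‖x‖ ^ 2 := by
      calc |⟪x, T x⟫| ≤ ‖x‖ * ‖T x‖ := abs_real_inner_le_norm x (T x)
        _ ≤ ‖x‖ * (‖T‖ * ‖x‖) := by
            gcongr; exact T.le_opNorm x
        _ = ‖T‖ * ‖x‖ ^ 2 := by ring
    rw [h1]
    calc |⟪x, T x⟫| ≤ ‖T‖ * ‖x‖ ^ 2 := h3
      _ = specNorm A * ∑ i, W i j ^ 2 := by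
          rw [← real_inner_self_eq_norm_sq, h2]; rfl
  have htr : (W * Wᵀ).trace = ∑ j, ∑ i, W i j ^ 2 := by
    simp only [Matrix.trace, Matrix.diag, Matrix.mul_apply, Matrix.transpose_apply, sq]
    exact Finset.sum_comm
  calc |(Wᵀ * A * W).trace| ≤ ∑ j, |(Wᵀ * A * W) j j| := by
        simpa [Matrix.trace, Matrix.diag] using
          Finset.abs_sum_le_sum_abs (fun j => (Wᵀ * A * W) j j) Finset.univ
    _ ≤ ∑ j, specNorm A * ∑ i, W i j ^ 2 := Finset.sum_le_sum fun j _ => key j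
    _ = specNorm A * (W * Wᵀ).trace := by rw [htr, Finset.mul_sum]

/-- deterministic perturbation inequality for the bootstrapped multi-view
correlation: the subsampled trace ratio is controlled by the population ratio plus
spectral-norm deviations of the total-view and within-view covariances. -/
theorem mvcorr_perturbation_bound (d : ℕ)
    (Rb Rw Sb Sw : Matrix (Fin d) (Fin d) ℝ)
    (hRb : Rb.IsSymm) (hRw : Rw.IsSymm) (hSb : Sb.IsSymm) (hSw : Sw.IsSymm)
    (W : Matrix (Fin d) (Fin d) ℝ)
    (h1 : 0 ≤ (Wᵀ * Rb * W).trace)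
    (h2 : 0 < (Wᵀ * Rw * W).trace)
    (h3 : 0 < (Wᵀ * Sw * W).trace - specNorm (Rw - Sw) * (W * Wᵀ).trace) :
    (Wᵀ * Rb * W).trace / (Wᵀ * Rw * W).trace ≤
      ((Wᵀ * Sb * W).trace +
          (specNorm ((Rb + Rw) - (Sb + Sw)) + specNorm (Rw - Sw)) * (W * Wᵀ).trace) /
        ((Wᵀ * Sw * W).trace - specNorm (Rw - Sw) * (W * Wᵀ).trace) := by
  have ht := abs_le.mp (trace_quad_abs_le ((Rb + Rw) - (Sb + Sw)) W)
  have hw := abs_le.mp (trace_quad_abs_le (Rw - Sw) W)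
  have e1 : (Wᵀ * ((Rb + Rw) - (Sb + Sw)) * W).trace =
      (Wᵀ * Rb * W).trace + (Wᵀ * Rw * W).trace
        - (Wᵀ * Sb * W).trace - (Wᵀ * Sw * W).trace := by
    simp [Matrix.mul_sub, Matrix.mul_add, Matrix.sub_mul, Matrix.add_mul]
    ring
  have e2 : (Wᵀ * (Rw - Sw) * W).trace = (Wᵀ * Rw * W).trace - (Wᵀ * Sw * W).trace := by
    simp [Matrix.mul_sub, Matrix.sub_mul]
  rw [e1] at ht
  rw [e2] at hw
  apply div_le_div₀
  · nlinarith [ht.1, ht.2, hw.1, hw.2]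
  · nlinarith [ht.1, ht.2, hw.1, hw.2]
  · exact h3
  · nlinarith [hw.1]
end
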